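/- arXiv:1405.0986 — 2 statements merged into one kernel-verified Lean document; each statement's English description precedes it below -/
import Mathlib

section
/- Let ρ be a fully separable three-qubit density matrix on ℂ²⊗ℂ²⊗ℂ², with entries indexed by the basis |000⟩,…,|111⟩. Then |ρ(000,111)|⁴ ≤ ρ(000,000)·ρ(011,011)·ρ(101,101)·ρ(110,110), where the diagonal entries on the right are nonnegative reals. -/
open Matrix
open scoped Kronecker ComplexOrder

set_option maxRecDepth 4000

lemma psd2_diag_re_nonneg {M : Matrix (Fin 2) (Fin 2) ℂ} (h : M.PosSemidef) (i : Fin 2) :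
    0 ≤ (M i i).re := by
  have := h.re_dotProduct_nonneg (Pi.single i 1)
  simpa [dotProduct, Matrix.mulVec, Fin.sum_univ_two, Pi.single_apply, Fin.forall_fin_two] using this

lemma psd2_diag_real {M : Matrix (Fin 2) (Fin 2) ℂ} (h : M.PosSemidef) (i : Fin 2) :
    M i i = ((M i i).re : ℂ) := by
  have := h.isHermitian.apply i i
  exact (Complex.conj_eq_iff_re.mp this).symm

lemma psd2_offdiag_sq_le {M : Matrix (Fin 2) (Fin 2) ℂ} (h : M.PosSemidef) :
    ‖M 0 1‖ ^ 2 ≤ (M 0 0).re * (M 1 1).re := by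
  set a := (M 0 0).re with ha
  set d := (M 1 1).re with hd'
  set m := ‖M 0 1‖ with hm'
  have h10 : M 1 0 = star (M 0 1) := (h.isHermitian.apply 1 0).symm
  have h00 : M 0 0 = (a : ℂ) := psd2_diag_real h 0
  have h11 : M 1 1 = (d : ℂ) := psd2_diag_real h 1
  have hm : M 0 1 * star (M 0 1) = ((m ^ 2 : ℝ) : ℂ) := by
    rw [Complex.star_def, Complex.mul_conj]
    norm_cast
    rw [Complex.normSq_eq_norm_sq]
  have key : ∀ t : ℝ, 0 ≤ a * (t * t) + (-(2 * m ^ 2)) * t + d * m ^ 2 := by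
    intro t
    have hnn := h.re_dotProduct_nonneg ![(t : ℂ), -star (M 0 1)]
    have e : dotProduct (star ![(t : ℂ), -star (M 0 1)])
        (M *ᵥ ![(t : ℂ), -star (M 0 1)]) =
        ((a * (t * t) + (-(2 * m ^ 2)) * t + d * m ^ 2 : ℝ) : ℂ) := by
      have expand : dotProduct (star ![(t : ℂ), -star (M 0 1)])
          (M *ᵥ ![(t : ℂ), -star (M 0 1)]) =
          (t : ℂ) * (a : ℂ) * (t : ℂ) - (t : ℂ) * (M 0 1 * star (M 0 1))
            - (M 0 1 * star (M 0 1)) * (t : ℂ) + (d : ℂ) * (M 0 1 * star (M 0 1)) := by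
        simp [dotProduct, Matrix.mulVec, Fin.sum_univ_two, h10, h00, h11]
        ring
      rw [expand, hm]
      push_cast
      ring
    rw [e] at hnn
    exact_mod_cast hnn
  have hdisc := discrim_le_zero key
  rw [discrim] at hdisc
  nlinarith [sq_nonneg m, psd2_diag_re_nonneg h 0, psd2_diag_re_nonneg h 1,
    mul_nonneg (psd2_diag_re_nonneg h 0) (psd2_diag_re_nonneg h 1)]

theorem aux_entry_criterion
    (ρ : Matrix (Fin 2 × Fin 2 × Fin 2) (Fin 2 × Fin 2 × Fin 2) ℂ)
    (hsep : ∃ (n : ℕ) (p : Fin n → ℝ) (ρA : Fin n → Matrix (Fin 2) (Fin 2) ℂ)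
      (ρB : Fin n → Matrix (Fin 2) (Fin 2) ℂ) (ρC : Fin n → Matrix (Fin 2) (Fin 2) ℂ),
      (∀ k, 0 ≤ p k) ∧ (∑ k, p k = 1) ∧
      (∀ k, (ρA k).PosSemidef) ∧ (∀ k, (ρB k).PosSemidef) ∧ (∀ k, (ρC k).PosSemidef) ∧
      ρ = ∑ k, (p k : ℂ) • (ρA k ⊗ₖ (ρB k ⊗ₖ ρC k))) :
    ‖ρ (0, 0, 0) (1, 1, 1)‖ ^ 4 ≤
      (ρ (0, 0, 0) (0, 0, 0)).re * (ρ (0, 1, 1) (0, 1, 1)).re *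
      (ρ (1, 0, 1) (1, 0, 1)).re * (ρ (1, 1, 0) (1, 1, 0)).re := by
  obtain ⟨n, p, ρA, ρB, ρC, hp, hpsum, hA, hB, hC, hrep⟩ := hsep
  set a : Fin n → ℝ := fun k => (ρA k 0 0).re with ha_def
  set a' : Fin n → ℝ := fun k => (ρA k 1 1).re with ha'_def
  set b : Fin n → ℝ := fun k => (ρB k 0 0).re with hb_def
  set b' : Fin n → ℝ := fun k => (ρB k 1 1).re with hb'_def
  set c : Fin n → ℝ := fun k => (ρC k 0 0).re with hc_def
  set c' : Fin n → ℝ := fun k => (ρC k 1 1).re with hc'_def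
  set x : Fin n → ℝ := fun k => p k * (a k * (b k * c k)) with hx_def
  set y : Fin n → ℝ := fun k => p k * (a k * (b' k * c' k)) with hy_def
  set z : Fin n → ℝ := fun k => p k * (a' k * (b k * c' k)) with hz_def
  set w : Fin n → ℝ := fun k => p k * (a' k * (b' k * c k)) with hw_def
  have hxnn : ∀ k, 0 ≤ x k := fun k => by
    have := psd2_diag_re_nonneg (hA k) 0
    have := psd2_diag_re_nonneg (hB k) 0
    have := psd2_diag_re_nonneg (hC k) 0
    have := hp k
    positivity
  have hynn : ∀ k, 0 ≤ y k := fun k => by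
    have := psd2_diag_re_nonneg (hA k) 0
    have := psd2_diag_re_nonneg (hB k) 1
    have := psd2_diag_re_nonneg (hC k) 1
    have := hp k
    positivity
  have hznn : ∀ k, 0 ≤ z k := fun k => by
    have := psd2_diag_re_nonneg (hA k) 1
    have := psd2_diag_re_nonneg (hB k) 0
    have := psd2_diag_re_nonneg (hC k) 1
    have := hp k
    positivity
  have hwnn : ∀ k, 0 ≤ w k := fun k => by
    have := psd2_diag_re_nonneg (hA k) 1
    have := psd2_diag_re_nonneg (hB k) 1
    have := psd2_diag_re_nonneg (hC k) 0
    have := hp k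
    positivity
  -- diagonal entries of ρ
  have hdiag : ∀ (i j l : Fin 2) (q : Fin n → ℝ),
      (∀ k, (ρA k i i).re * ((ρB k j j).re * (ρC k l l).re) * p k = q k) →
      (ρ (i, j, l) (i, j, l)).re = ∑ k, q k := by
    intro i j l q hq
    rw [hrep, Matrix.sum_apply, Complex.re_sum]
    refine Finset.sum_congr rfl fun k _ => ?_
    have : ((p k : ℂ) • (ρA k ⊗ₖ (ρB k ⊗ₖ ρC k))) (i, j, l) (i, j, l) = ((q k : ℝ) : ℂ) := by
      simp only [Matrix.smul_apply, Matrix.kroneckerMap_apply, smul_eq_mul]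
      rw [psd2_diag_real (hA k) i, psd2_diag_real (hB k) j, psd2_diag_real (hC k) l, ← hq k]
      push_cast
      ring
    rw [this, Complex.ofReal_re]
  have h000 : (ρ (0, 0, 0) (0, 0, 0)).re = ∑ k, x k :=
    hdiag 0 0 0 x fun k => by simp only [hx_def]; ring
  have h011 : (ρ (0, 1, 1) (0, 1, 1)).re = ∑ k, y k :=
    hdiag 0 1 1 y fun k => by simp only [hy_def]; ring
  have h101 : (ρ (1, 0, 1) (1, 0, 1)).re = ∑ k, z k :=
    hdiag 1 0 1 z fun k => by simp only [hz_def]; ring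
  have h110 : (ρ (1, 1, 0) (1, 1, 0)).re = ∑ k, w k :=
    hdiag 1 1 0 w fun k => by simp only [hw_def]; ring
  -- the off-diagonal entry bound
  set f : Fin n → ℝ :=
    fun k => p k * (‖ρA k 0 1‖ * (‖ρB k 0 1‖ * ‖ρC k 0 1‖))
    with hf_def
  have habs : ‖ρ (0, 0, 0) (1, 1, 1)‖ ≤ ∑ k, f k := by
    rw [hrep, Matrix.sum_apply]
    refine le_trans (norm_sum_le _ _) (le_of_eq (Finset.sum_congr rfl fun k _ => ?_))
    simp only [Matrix.smul_apply, Matrix.kroneckerMap_apply, smul_eq_mul, norm_mul,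
      Complex.norm_real, Real.norm_eq_abs, hf_def]
    rw [abs_of_nonneg (hp k)]
  set r : Fin n → ℝ :=
    fun k => Real.sqrt (Real.sqrt (x k * y k) * Real.sqrt (z k * w k)) with hr_def
  have hfnn : ∀ k, 0 ≤ f k := fun k => by
    have := hp k
    simp only [hf_def]
    positivity
  have hfr : ∀ k, f k ≤ r k := by
    intro k
    have hAk := psd2_offdiag_sq_le (hA k)
    have hBk := psd2_offdiag_sq_le (hB k)
    have hCk := psd2_offdiag_sq_le (hC k)
    have hr2 : r k ^ 2 = p k ^ 2 * ((a k * a' k) * ((b k * b' k) * (c k * c' k))) := by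
      have h1 : 0 ≤ Real.sqrt (x k * y k) * Real.sqrt (z k * w k) := by positivity
      have h2 : x k * y k * (z k * w k) =
          (p k ^ 2 * ((a k * a' k) * ((b k * b' k) * (c k * c' k)))) ^ 2 := by
        simp only [hx_def, hy_def, hz_def, hw_def]; ring
      rw [hr_def]
      simp only []
      rw [Real.sq_sqrt h1, ← Real.sqrt_mul (mul_nonneg (hxnn k) (hynn k)), h2, Real.sqrt_sq]
      have := hp k
      have := psd2_diag_re_nonneg (hA k) 0
      have := psd2_diag_re_nonneg (hA k) 1
      have := psd2_diag_re_nonneg (hB k) 0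
      have := psd2_diag_re_nonneg (hB k) 1
      have := psd2_diag_re_nonneg (hC k) 0
      have := psd2_diag_re_nonneg (hC k) 1
      positivity
    have hf2 : f k ^ 2 ≤ r k ^ 2 := by
      rw [hr2]
      have e : f k ^ 2 = p k ^ 2 * (‖ρA k 0 1‖ ^ 2 *
          (‖ρB k 0 1‖ ^ 2 * ‖ρC k 0 1‖ ^ 2)) := by
        simp only [hf_def]; ring
      rw [e]
      have ha0 := psd2_diag_re_nonneg (hA k) 0
      have ha1 := psd2_diag_re_nonneg (hA k) 1
      have hb0 := psd2_diag_re_nonneg (hB k) 0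
      have hb1 := psd2_diag_re_nonneg (hB k) 1
      have hc0 := psd2_diag_re_nonneg (hC k) 0
      have hc1 := psd2_diag_re_nonneg (hC k) 1
      refine mul_le_mul_of_nonneg_left ?_ (sq_nonneg (p k))
      refine mul_le_mul hAk (mul_le_mul hBk hCk (sq_nonneg _) (mul_nonneg hb0 hb1))
        (mul_nonneg (sq_nonneg _) (sq_nonneg _)) (mul_nonneg ha0 ha1)
    calc f k = Real.sqrt (f k ^ 2) := (Real.sqrt_sq (hfnn k)).symm
      _ ≤ Real.sqrt (r k ^ 2) := Real.sqrt_le_sqrt hf2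
      _ = r k := Real.sqrt_sq (Real.sqrt_nonneg _)
  have hS : ‖ρ (0, 0, 0) (1, 1, 1)‖ ≤ ∑ k, r k :=
    habs.trans (Finset.sum_le_sum fun k _ => hfr k)
  have hS2 : (∑ k, r k) ^ 2 ≤ (∑ k, Real.sqrt (x k * y k)) * (∑ k, Real.sqrt (z k * w k)) :=
    Finset.sum_sq_le_sum_mul_sum_of_sq_eq_mul _ (fun k _ => Real.sqrt_nonneg _)
      (fun k _ => Real.sqrt_nonneg _)
      (fun k _ => Real.sq_sqrt (by positivity))
  have hU : (∑ k, Real.sqrt (x k * y k)) ^ 2 ≤ (∑ k, x k) * ∑ k, y k :=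
    Finset.sum_sq_le_sum_mul_sum_of_sq_eq_mul _ (fun k _ => hxnn k) (fun k _ => hynn k)
      (fun k _ => Real.sq_sqrt (mul_nonneg (hxnn k) (hynn k)))
  have hV : (∑ k, Real.sqrt (z k * w k)) ^ 2 ≤ (∑ k, z k) * ∑ k, w k :=
    Finset.sum_sq_le_sum_mul_sum_of_sq_eq_mul _ (fun k _ => hznn k) (fun k _ => hwnn k)
      (fun k _ => Real.sq_sqrt (mul_nonneg (hznn k) (hwnn k)))
  rw [h000, h011, h101, h110]
  have habsnn : (0:ℝ) ≤ ‖ρ (0, 0, 0) (1, 1, 1)‖ := norm_nonneg _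
  calc ‖ρ (0, 0, 0) (1, 1, 1)‖ ^ 4
      ≤ (∑ k, r k) ^ 4 := pow_le_pow_left₀ habsnn hS 4
    _ = ((∑ k, r k) ^ 2) ^ 2 := by ring
    _ ≤ ((∑ k, Real.sqrt (x k * y k)) * (∑ k, Real.sqrt (z k * w k))) ^ 2 := by
        have h0 : (0:ℝ) ≤ (∑ k, r k) ^ 2 := sq_nonneg _
        exact pow_le_pow_left₀ h0 hS2 2
    _ = (∑ k, Real.sqrt (x k * y k)) ^ 2 * (∑ k, Real.sqrt (z k * w k)) ^ 2 := by ring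
    _ ≤ ((∑ k, x k) * ∑ k, y k) * ((∑ k, z k) * ∑ k, w k) := by
        exact mul_le_mul hU hV (sq_nonneg _)
          (mul_nonneg (Finset.sum_nonneg fun k _ => hxnn k)
            (Finset.sum_nonneg fun k _ => hynn k))
    _ = (∑ k, x k) * (∑ k, y k) * (∑ k, z k) * (∑ k, w k) := by ring




noncomputable section

/-- A density matrix: a positive semidefinite complex matrix of trace 1. -/
def IsDensityMatrix {ι : Type*} [Fintype ι] (ρ : Matrix ι ι ℂ) : Prop :=
  ρ.PosSemidef ∧ ρ.trace = 1

/-- A tripartite state is fully separable if it is a finite convex combination of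
Kronecker products of density matrices on the three factors. -/
def FullySeparable {dA dB dC : ℕ}
    (ρ : Matrix (Fin dA × Fin dB × Fin dC) (Fin dA × Fin dB × Fin dC) ℂ) : Prop :=
  ∃ (n : ℕ) (p : Fin n → ℝ) (ρA : Fin n → Matrix (Fin dA) (Fin dA) ℂ)
    (ρB : Fin n → Matrix (Fin dB) (Fin dB) ℂ) (ρC : Fin n → Matrix (Fin dC) (Fin dC) ℂ),
    (∀ k, 0 ≤ p k) ∧ (∑ k, p k = 1) ∧
    (∀ k, IsDensityMatrix (ρA k)) ∧ (∀ k, IsDensityMatrix (ρB k)) ∧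
    (∀ k, IsDensityMatrix (ρC k)) ∧
    ρ = ∑ k, (p k : ℂ) • (ρA k ⊗ₖ (ρB k ⊗ₖ ρC k))

/-- **The matrix-entry criterion Eq. (62) of Gühne–Seevinck type.**
For every fully separable three-qubit state:
`|ρ_{000,111}|⁴ ≤ ρ_{000,000} ρ_{011,011} ρ_{101,101} ρ_{110,110}`. -/
theorem fully_separable_matrix_entry_criterion4
    (ρ : Matrix (Fin 2 × Fin 2 × Fin 2) (Fin 2 × Fin 2 × Fin 2) ℂ)
    (hρ : IsDensityMatrix ρ) (hsep : FullySeparable ρ) :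
    ‖ρ (0, 0, 0) (1, 1, 1)‖ ^ 4 ≤
      (ρ (0, 0, 0) (0, 0, 0)).re * (ρ (0, 1, 1) (0, 1, 1)).re *
      (ρ (1, 0, 1) (1, 0, 1)).re * (ρ (1, 1, 0) (1, 1, 0)).re := by
  obtain ⟨n, p, ρA, ρB, ρC, hp, hs, hA, hB, hC, hrep⟩ := hsep
  exact aux_entry_criterion ρ ⟨n, p, ρA, ρB, ρC, hp, hs, fun k => (hA k).1,
    fun k => (hB k).1, fun k => (hC k).1, hrep⟩
end
end

section
/- Let ρ be a biseparable tripartite density matrix on ℂ^{d_1}⊗ℂ^{d_2}⊗ℂ^{d_3}, i.e., a finite convex combination of density matrices each of which is separable with respect to one of the three bipartitions {1}|{2,3}, {2}|{1,3}, {3}|{1,2}. For each k let X_k, Y_k be d_k×d_k complex matrices. For a subset M ⊆ {1,2,3}, define O_k^M = X_kX_k† if k ∈ M and O_k^M = Y_k†Y_k if k ∉ M, and let T_M = Re Tr((O_1^M ⊗ O_2^M ⊗ O_3^M)ρ) (a nonnegative real). Then |Tr((X_1Y_1 ⊗ X_2Y_2 ⊗ X_3Y_3)ρ)| ≤ √(T_{{1}}·T_{{2,3}})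 + √(T_{{2}}·T_{{1,3}}) + √(T_{{3}}·T_{{1,2}}). This inequality holds for all biseparable states and can only be violated by genuinely multipartite entangled states. -/
open Matrix
open scoped Kronecker ComplexOrder

noncomputable section

/-- Separability of a tripartite state with respect to the bipartition `{1}|{2,3}`. -/
def SepCut1 {d₁ d₂ d₃ : ℕ}
    (ρ : Matrix (Fin d₁ × Fin d₂ × Fin d₃) (Fin d₁ × Fin d₂ × Fin d₃) ℂ) : Prop :=
  ∃ (n : ℕ) (p : Fin n → ℝ) (σ : Fin n → Matrix (Fin d₁) (Fin d₁) ℂ)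
    (τ : Fin n → Matrix (Fin d₂ × Fin d₃) (Fin d₂ × Fin d₃) ℂ),
    (∀ k, 0 ≤ p k) ∧ (∑ k, p k = 1) ∧
    (∀ k, IsDensityMatrix (σ k)) ∧ (∀ k, IsDensityMatrix (τ k)) ∧
    ρ = ∑ k, (p k : ℂ) • (σ k ⊗ₖ τ k)

/-- Separability of a tripartite state with respect to the bipartition `{2}|{1,3}`. -/
def SepCut2 {d₁ d₂ d₃ : ℕ}
    (ρ : Matrix (Fin d₁ × Fin d₂ × Fin d₃) (Fin d₁ × Fin d₂ × Fin d₃) ℂ) : Prop :=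
  ∃ (n : ℕ) (p : Fin n → ℝ) (σ : Fin n → Matrix (Fin d₂) (Fin d₂) ℂ)
    (τ : Fin n → Matrix (Fin d₁ × Fin d₃) (Fin d₁ × Fin d₃) ℂ),
    (∀ k, 0 ≤ p k) ∧ (∑ k, p k = 1) ∧
    (∀ k, IsDensityMatrix (σ k)) ∧ (∀ k, IsDensityMatrix (τ k)) ∧
    ρ = ∑ k, (p k : ℂ) •
      Matrix.of (fun x y : Fin d₁ × Fin d₂ × Fin d₃ =>
        σ k x.2.1 y.2.1 * τ k (x.1, x.2.2) (y.1, y.2.2))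

/-- Separability of a tripartite state with respect to the bipartition `{3}|{1,2}`. -/
def SepCut3 {d₁ d₂ d₃ : ℕ}
    (ρ : Matrix (Fin d₁ × Fin d₂ × Fin d₃) (Fin d₁ × Fin d₂ × Fin d₃) ℂ) : Prop :=
  ∃ (n : ℕ) (p : Fin n → ℝ) (σ : Fin n → Matrix (Fin d₃) (Fin d₃) ℂ)
    (τ : Fin n → Matrix (Fin d₁ × Fin d₂) (Fin d₁ × Fin d₂) ℂ),
    (∀ k, 0 ≤ p k) ∧ (∑ k, p k = 1) ∧
    (∀ k, IsDensityMatrix (σ k)) ∧ (∀ k, IsDensityMatrix (τ k)) ∧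
    ρ = ∑ k, (p k : ℂ) •
      Matrix.of (fun x y : Fin d₁ × Fin d₂ × Fin d₃ =>
        σ k x.2.2 y.2.2 * τ k (x.1, x.2.1) (y.1, y.2.1))

/-- A tripartite state is biseparable if it is a finite convex combination of density
matrices each of which is separable with respect to one of the three bipartitions. -/
def Biseparable {d₁ d₂ d₃ : ℕ}
    (ρ : Matrix (Fin d₁ × Fin d₂ × Fin d₃) (Fin d₁ × Fin d₂ × Fin d₃) ℂ) : Prop :=
  ∃ (n : ℕ) (p : Fin n → ℝ)
    (σ : Fin n → Matrix (Fin d₁ × Fin d₂ × Fin d₃) (Fin d₁ × Fin d₂ × Fin d₃) ℂ),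
    (∀ k, 0 ≤ p k) ∧ (∑ k, p k = 1) ∧ (∀ k, IsDensityMatrix (σ k)) ∧
    (∀ k, SepCut1 (σ k) ∨ SepCut2 (σ k) ∨ SepCut3 (σ k)) ∧
    ρ = ∑ k, (p k : ℂ) • σ k

section TraceCS

variable {ι : Type*} [Fintype ι] [DecidableEq ι]

lemma trace_conj_mul (M N : Matrix ι ι ℂ) :
    (Mᴴ * N).trace = ∑ p : ι × ι, (starRingEnd ℂ) (M p.1 p.2) * N p.1 p.2 := by
  rw [Fintype.sum_prod_type]
  simp only [Matrix.trace, Matrix.diag, Matrix.mul_apply, Matrix.conjTranspose_apply]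
  rw [Finset.sum_comm]
  rfl

lemma abs_trace_CS (M N : Matrix ι ι ℂ) :
    ‖(Mᴴ * N).trace‖ ≤
      Real.sqrt ((Mᴴ * M).trace.re) * Real.sqrt ((Nᴴ * N).trace.re) := by
  let f : Matrix ι ι ℂ → EuclideanSpace ℂ (ι × ι) := fun P => WithLp.toLp 2 (fun p : ι × ι => P p.1 p.2)
  have key : ∀ P Q : Matrix ι ι ℂ, (Pᴴ * Q).trace = (inner ℂ (f P) (f Q) : ℂ) := by
    intro P Q
    rw [trace_conj_mul]
    simp [f, PiLp.inner_apply, RCLike.inner_apply, mul_comm]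
  have h1 : ‖(inner ℂ (f M) (f N) : ℂ)‖ ≤ ‖f M‖ * ‖f N‖ := norm_inner_le_norm _ _
  have h2 : ∀ P : Matrix ι ι ℂ, ‖f P‖ = Real.sqrt ((Pᴴ * P).trace.re) := by
    intro P
    rw [norm_eq_sqrt_re_inner (𝕜 := ℂ), ← key]
    simp [RCLike.re_to_complex]
  rw [key]
  calc ‖(inner ℂ (f M) (f N) : ℂ)‖ ≤ ‖f M‖ * ‖f N‖ := h1
    _ = _ := by rw [h2, h2]

end TraceCS

section PSD

set_option linter.unusedSectionVars false

open scoped MatrixOrder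

lemma Matrix.posSemidef_iff_eq_transpose_mul_self {ι : Type*} [Fintype ι] [DecidableEq ι]
    {A : Matrix ι ι ℂ} : A.PosSemidef ↔ ∃ B : Matrix ι ι ℂ, A = Bᴴ * B := by
  constructor
  · intro hA
    obtain ⟨B, hB⟩ := CStarAlgebra.nonneg_iff_eq_star_mul_self.mp hA.nonneg
    exact ⟨B, hB⟩
  · rintro ⟨B, rfl⟩
    exact Matrix.posSemidef_conjTranspose_mul_self B

variable {ι : Type*} [Fintype ι] [DecidableEq ι]

lemma psd_trace_real_nonneg {Q : Matrix ι ι ℂ} (hQ : Q.PosSemidef) :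
    Q.trace.im = 0 ∧ 0 ≤ Q.trace.re := by
  obtain ⟨B, rfl⟩ := Matrix.posSemidef_iff_eq_transpose_mul_self.mp hQ
  rw [trace_conj_mul]
  constructor
  · rw [Complex.im_sum]
    refine Finset.sum_eq_zero fun p _ => ?_
    simp [Complex.mul_im, Complex.conj_re, Complex.conj_im]
    ring
  · rw [Complex.re_sum]
    refine Finset.sum_nonneg fun p _ => ?_
    simp [Complex.mul_re, Complex.conj_re, Complex.conj_im]
    nlinarith [sq_nonneg (B p.1 p.2).re, sq_nonneg (B p.1 p.2).im]

lemma psd_mul_trace {P ρ : Matrix ι ι ℂ} (hP : P.PosSemidef) (hρ : ρ.PosSemidef) :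
    ((P * ρ).trace).im = 0 ∧ 0 ≤ ((P * ρ).trace).re := by
  have hSH : (CFC.sqrt ρ)ᴴ = CFC.sqrt ρ := (CFC.sqrt_nonneg ρ).posSemidef.1
  have h1 : (P * ρ).trace = (CFC.sqrt ρ * P * (CFC.sqrt ρ)ᴴ).trace := by
    rw [hSH]
    conv_lhs => rw [← CFC.sqrt_mul_sqrt_self ρ hρ.nonneg]
    rw [← Matrix.mul_assoc, Matrix.trace_mul_comm, Matrix.mul_assoc]
  rw [h1]
  exact psd_trace_real_nonneg (hP.mul_mul_conjTranspose_same (CFC.sqrt ρ))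

lemma key_CS (A B ρ : Matrix ι ι ℂ) (hρ : ρ.PosSemidef) :
    ‖((A * B) * ρ).trace‖ ≤
      Real.sqrt ((A * Aᴴ * ρ).trace.re * (Bᴴ * B * ρ).trace.re) := by
  set S := CFC.sqrt ρ with hS
  have hSH : Sᴴ = S := (CFC.sqrt_nonneg ρ).posSemidef.1
  have hSS : S * S = ρ := CFC.sqrt_mul_sqrt_self ρ hρ.nonneg
  have h1 : ((A * B) * ρ).trace = ((Aᴴ * S)ᴴ * (B * S)).trace := by
    rw [Matrix.conjTranspose_mul, Matrix.conjTranspose_conjTranspose, hSH,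
      ← hSS, ← Matrix.mul_assoc, Matrix.trace_mul_comm]
    simp only [Matrix.mul_assoc]
  have h2 : ((Aᴴ * S)ᴴ * (Aᴴ * S)).trace = (A * Aᴴ * ρ).trace := by
    rw [Matrix.conjTranspose_mul, Matrix.conjTranspose_conjTranspose, hSH,
      ← hSS, ← Matrix.mul_assoc, Matrix.trace_mul_comm, ← Matrix.mul_assoc,
      ← Matrix.mul_assoc, Matrix.mul_assoc, Matrix.trace_mul_comm]
  have h3 : ((B * S)ᴴ * (B * S)).trace = (Bᴴ * B * ρ).trace := by
    rw [Matrix.conjTranspose_mul, hSH, ← hSS, ← Matrix.mul_assoc,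
      Matrix.trace_mul_comm, ← Matrix.mul_assoc, ← Matrix.mul_assoc,
      Matrix.mul_assoc, Matrix.trace_mul_comm]
  have h4 := abs_trace_CS (Aᴴ * S) (B * S)
  rw [h1, Real.sqrt_mul (by rw [← h2]; exact (psd_trace_real_nonneg
    (Matrix.posSemidef_conjTranspose_mul_self _)).2)]
  rw [← h2, ← h3]
  exact h4

end PSD

section Kron

set_option linter.unusedSectionVars false

variable {α β : Type*} [Fintype α] [DecidableEq α] [Fintype β] [DecidableEq β]

lemma kron_conjTranspose (A : Matrix α α ℂ) (B : Matrix β β ℂ) :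
    (A ⊗ₖ B)ᴴ = Aᴴ ⊗ₖ Bᴴ := by
  ext ⟨i, j⟩ ⟨k, l⟩
  simp [Matrix.conjTranspose_apply, Matrix.kroneckerMap_apply]

lemma kron_posSemidef {A : Matrix α α ℂ} {B : Matrix β β ℂ}
    (hA : A.PosSemidef) (hB : B.PosSemidef) : (A ⊗ₖ B).PosSemidef := by
  obtain ⟨C, rfl⟩ := Matrix.posSemidef_iff_eq_transpose_mul_self.mp hA
  obtain ⟨D, rfl⟩ := Matrix.posSemidef_iff_eq_transpose_mul_self.mp hB
  rw [Matrix.mul_kronecker_mul, ← kron_conjTranspose]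
  exact Matrix.posSemidef_conjTranspose_mul_self _

lemma group_bound {n : ℕ} (s : Finset (Fin n)) (p u v : Fin n → ℝ)
    (hp : ∀ k, 0 ≤ p k) (hu : ∀ k, 0 ≤ u k) (hv : ∀ k, 0 ≤ v k) :
    ∑ k ∈ s, p k * Real.sqrt (u k * v k) ≤
      Real.sqrt ((∑ k, p k * u k) * (∑ k, p k * v k)) := by
  have h1 : ∀ k, Real.sqrt (p k * u k) * Real.sqrt (p k * v k)
      = p k * Real.sqrt (u k * v k) := by
    intro k
    rw [← Real.sqrt_mul (mul_nonneg (hp k) (hu k)),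
      show p k * u k * (p k * v k) = p k * p k * (u k * v k) by ring,
      Real.sqrt_mul (mul_nonneg (hp k) (hp k)), Real.sqrt_mul_self (hp k)]
  calc ∑ k ∈ s, p k * Real.sqrt (u k * v k)
      = ∑ k ∈ s, Real.sqrt (p k * u k) * Real.sqrt (p k * v k) := by
        exact Finset.sum_congr rfl fun k _ => (h1 k).symm
    _ ≤ Real.sqrt (∑ k ∈ s, p k * u k) * Real.sqrt (∑ k ∈ s, p k * v k) :=
        Real.sum_sqrt_mul_sqrt_le s (fun k => mul_nonneg (hp k) (hu k))
          (fun k => mul_nonneg (hp k) (hv k))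
    _ ≤ Real.sqrt (∑ k, p k * u k) * Real.sqrt (∑ k, p k * v k) := by
        refine mul_le_mul (Real.sqrt_le_sqrt ?_) (Real.sqrt_le_sqrt ?_)
          (Real.sqrt_nonneg _) (Real.sqrt_nonneg _)
        · exact Finset.sum_le_sum_of_subset_of_nonneg (Finset.subset_univ s)
            (fun k _ _ => mul_nonneg (hp k) (hu k))
        · exact Finset.sum_le_sum_of_subset_of_nonneg (Finset.subset_univ s)
            (fun k _ _ => mul_nonneg (hp k) (hv k))
    _ = _ := (Real.sqrt_mul (Finset.sum_nonneg fun k _ => mul_nonneg (hp k) (hu k)) _).symm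

lemma prod_state_CS (X Y : Matrix α α ℂ) (C D : Matrix β β ℂ)
    {σ : Matrix α α ℂ} {τ : Matrix β β ℂ} (hσ : σ.PosSemidef) (hτ : τ.PosSemidef) :
    ‖(((X * Y) ⊗ₖ (C * D)) * (σ ⊗ₖ τ)).trace‖ ≤
      Real.sqrt ((((X * Xᴴ) ⊗ₖ (Dᴴ * D)) * (σ ⊗ₖ τ)).trace.re *
                 (((Yᴴ * Y) ⊗ₖ (C * Cᴴ)) * (σ ⊗ₖ τ)).trace.re) := by
  have hfac : ∀ (P : Matrix α α ℂ) (Q : Matrix β β ℂ),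
      ((P ⊗ₖ Q) * (σ ⊗ₖ τ)).trace = (P * σ).trace * (Q * τ).trace := by
    intro P Q
    rw [← Matrix.mul_kronecker_mul, Matrix.trace_kronecker]
  obtain ⟨hxi, hxr⟩ := psd_mul_trace (Matrix.posSemidef_self_mul_conjTranspose X) hσ
  obtain ⟨hyi, hyr⟩ := psd_mul_trace (Matrix.posSemidef_conjTranspose_mul_self Y) hσ
  obtain ⟨hci, hcr⟩ := psd_mul_trace (Matrix.posSemidef_self_mul_conjTranspose C) hτ
  obtain ⟨hdi, hdr⟩ := psd_mul_trace (Matrix.posSemidef_conjTranspose_mul_self D) hτ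
  rw [hfac, hfac, hfac, norm_mul, Complex.mul_re, Complex.mul_re, hxi, hdi, hyi, hci]
  simp only [zero_mul, mul_zero, sub_zero]
  calc ‖(X * Y * σ).trace‖ * ‖(C * D * τ).trace‖
      ≤ Real.sqrt ((X * Xᴴ * σ).trace.re * (Yᴴ * Y * σ).trace.re) *
        Real.sqrt ((C * Cᴴ * τ).trace.re * (Dᴴ * D * τ).trace.re) := by
        exact mul_le_mul (key_CS X Y σ hσ) (key_CS C D τ hτ)
          (norm_nonneg _) (Real.sqrt_nonneg _)
    _ = _ := by
        rw [← Real.sqrt_mul (mul_nonneg hxr hyr)]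
        congr 1
        ring

end Kron

section BipSepSec

set_option linter.unusedSectionVars false

variable {α β : Type*} [Fintype α] [DecidableEq α] [Fintype β] [DecidableEq β]

/-- Bipartite separability (no normalization required). -/
def BipSep (ω : Matrix (α × β) (α × β) ℂ) : Prop :=
  ∃ (n : ℕ) (p : Fin n → ℝ) (σ : Fin n → Matrix α α ℂ) (τ : Fin n → Matrix β β ℂ),
    (∀ k, 0 ≤ p k) ∧ (∀ k, (σ k).PosSemidef) ∧ (∀ k, (τ k).PosSemidef) ∧
    ω = ∑ k, (p k : ℂ) • (σ k ⊗ₖ τ k)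

lemma trace_mul_sum_smul {ι : Type*} [Fintype ι] (P : Matrix ι ι ℂ) {n : ℕ}
    (p : Fin n → ℝ) (ω : Fin n → Matrix ι ι ℂ) :
    (P * ∑ k, (p k : ℂ) • ω k).trace = ∑ k, (p k : ℂ) * (P * ω k).trace := by
  rw [Matrix.mul_sum, Matrix.trace_sum]
  exact Finset.sum_congr rfl fun k _ => by rw [Matrix.mul_smul, Matrix.trace_smul, smul_eq_mul]

lemma re_trace_mul_sum_smul {ι : Type*} [Fintype ι] (P : Matrix ι ι ℂ) {n : ℕ}
    (p : Fin n → ℝ) (ω : Fin n → Matrix ι ι ℂ) :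
    ((P * ∑ k, (p k : ℂ) • ω k).trace).re = ∑ k, p k * ((P * ω k).trace).re := by
  rw [trace_mul_sum_smul, Complex.re_sum]
  exact Finset.sum_congr rfl fun k _ => Complex.re_ofReal_mul _ _

lemma bipsep_bound (X Y : Matrix α α ℂ) (C D : Matrix β β ℂ)
    {ω : Matrix (α × β) (α × β) ℂ} (hω : BipSep ω) :
    ‖(((X * Y) ⊗ₖ (C * D)) * ω).trace‖ ≤
      Real.sqrt ((((X * Xᴴ) ⊗ₖ (Dᴴ * D)) * ω).trace.re *
                 (((Yᴴ * Y) ⊗ₖ (C * Cᴴ)) * ω).trace.re) := by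
  obtain ⟨n, p, σ, τ, hp, hσ, hτ, rfl⟩ := hω
  rw [trace_mul_sum_smul, re_trace_mul_sum_smul, re_trace_mul_sum_smul]
  set u : Fin n → ℝ := fun k => (((X * Xᴴ) ⊗ₖ (Dᴴ * D)) * (σ k ⊗ₖ τ k)).trace.re with hu
  set v : Fin n → ℝ := fun k => (((Yᴴ * Y) ⊗ₖ (C * Cᴴ)) * (σ k ⊗ₖ τ k)).trace.re with hv
  have hun : ∀ k, 0 ≤ u k := fun k => (psd_mul_trace
    (kron_posSemidef (Matrix.posSemidef_self_mul_conjTranspose X)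
      (Matrix.posSemidef_conjTranspose_mul_self D))
    (kron_posSemidef (hσ k) (hτ k))).2
  have hvn : ∀ k, 0 ≤ v k := fun k => (psd_mul_trace
    (kron_posSemidef (Matrix.posSemidef_conjTranspose_mul_self Y)
      (Matrix.posSemidef_self_mul_conjTranspose C))
    (kron_posSemidef (hσ k) (hτ k))).2
  calc ‖∑ k, (p k : ℂ) * ((((X * Y) ⊗ₖ (C * D)) * (σ k ⊗ₖ τ k)).trace)‖
      ≤ ∑ k, ‖(p k : ℂ) * ((((X * Y) ⊗ₖ (C * D)) * (σ k ⊗ₖ τ k)).trace)‖ :=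
        norm_sum_le _ _
    _ ≤ ∑ k, p k * Real.sqrt (u k * v k) := by
        refine Finset.sum_le_sum fun k _ => ?_
        rw [norm_mul, Complex.norm_real, Real.norm_eq_abs, abs_of_nonneg (hp k)]
        exact mul_le_mul_of_nonneg_left (prod_state_CS X Y C D (hσ k) (hτ k)) (hp k)
    _ ≤ _ := group_bound Finset.univ p u v hp hun hvn

lemma bipsep_bound₃ {γ : Type*} [Fintype γ] [DecidableEq γ]
    (X Y : Matrix α α ℂ) (P Q : Matrix β β ℂ) (R S : Matrix γ γ ℂ)
    {ω : Matrix (α × β × γ) (α × β × γ) ℂ} (hω : BipSep ω) :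
    ‖(((X * Y) ⊗ₖ ((P * Q) ⊗ₖ (R * S))) * ω).trace‖ ≤
      Real.sqrt ((((X * Xᴴ) ⊗ₖ ((Qᴴ * Q) ⊗ₖ (Sᴴ * S))) * ω).trace.re *
                 (((Yᴴ * Y) ⊗ₖ ((P * Pᴴ) ⊗ₖ (R * Rᴴ))) * ω).trace.re) := by
  have h1 : (P * Q) ⊗ₖ (R * S) = (P ⊗ₖ R) * (Q ⊗ₖ S) := Matrix.mul_kronecker_mul _ _ _ _
  have h2 : (Qᴴ * Q) ⊗ₖ (Sᴴ * S) = (Q ⊗ₖ S)ᴴ * (Q ⊗ₖ S) := by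
    rw [Matrix.mul_kronecker_mul, kron_conjTranspose]
  have h3 : (P * Pᴴ) ⊗ₖ (R * Rᴴ) = (P ⊗ₖ R) * (P ⊗ₖ R)ᴴ := by
    rw [Matrix.mul_kronecker_mul, kron_conjTranspose]
  rw [h1, h2, h3]
  exact bipsep_bound X Y (P ⊗ₖ R) (Q ⊗ₖ S) hω

end BipSepSec

section Cuts

set_option linter.unusedSectionVars false

lemma trace_submatrix_equiv' {γ δ : Type*} [Fintype γ] [Fintype δ]
    (M : Matrix γ γ ℂ) (e : δ ≃ γ) : (M.submatrix e e).trace = M.trace := by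
  simp only [Matrix.trace, Matrix.diag, Matrix.submatrix_apply]
  exact Fintype.sum_equiv e _ _ fun i => rfl

lemma trace_submatrix_mul {γ δ : Type*} [Fintype γ] [Fintype δ] [DecidableEq γ] [DecidableEq δ]
    (P ω : Matrix γ γ ℂ) (e : δ ≃ γ) :
    ((P.submatrix e e) * (ω.submatrix e e)).trace = (P * ω).trace := by
  rw [Matrix.submatrix_mul_equiv, trace_submatrix_equiv']

variable {d₁ d₂ d₃ : ℕ}

/-- The regrouping equivalence for the cut `{2}|{1,3}`. -/
def eq2 (d₁ d₂ d₃ : ℕ) : (Fin d₁ × Fin d₂ × Fin d₃) ≃ (Fin d₂ × Fin d₁ × Fin d₃) :=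
  ⟨fun x => (x.2.1, x.1, x.2.2), fun y => (y.2.1, y.1, y.2.2), fun _ => rfl, fun _ => rfl⟩

/-- The regrouping equivalence for the cut `{3}|{1,2}`. -/
def eq3 (d₁ d₂ d₃ : ℕ) : (Fin d₁ × Fin d₂ × Fin d₃) ≃ (Fin d₃ × Fin d₁ × Fin d₂) :=
  ⟨fun x => (x.2.2, x.1, x.2.1), fun y => (y.2.1, y.2.2, y.1), fun _ => rfl, fun _ => rfl⟩

lemma op2_eq (A : Matrix (Fin d₁) (Fin d₁) ℂ) (B : Matrix (Fin d₂) (Fin d₂) ℂ)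
    (C : Matrix (Fin d₃) (Fin d₃) ℂ) :
    A ⊗ₖ (B ⊗ₖ C) = (B ⊗ₖ (A ⊗ₖ C)).submatrix (eq2 d₁ d₂ d₃) (eq2 d₁ d₂ d₃) := by
  ext ⟨a, b, c⟩ ⟨a', b', c'⟩
  simp [Matrix.kroneckerMap_apply, eq2]
  ring

lemma op3_eq (A : Matrix (Fin d₁) (Fin d₁) ℂ) (B : Matrix (Fin d₂) (Fin d₂) ℂ)
    (C : Matrix (Fin d₃) (Fin d₃) ℂ) :
    A ⊗ₖ (B ⊗ₖ C) = (C ⊗ₖ (A ⊗ₖ B)).submatrix (eq3 d₁ d₂ d₃) (eq3 d₁ d₂ d₃) := by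
  ext ⟨a, b, c⟩ ⟨a', b', c'⟩
  simp [Matrix.kroneckerMap_apply, eq3]
  ring

lemma sepcut1_bipsep {ρ : Matrix (Fin d₁ × Fin d₂ × Fin d₃) (Fin d₁ × Fin d₂ × Fin d₃) ℂ}
    (h : SepCut1 ρ) : BipSep ρ := by
  obtain ⟨n, p, σ, τ, hp, _, hσ, hτ, hsum⟩ := h
  exact ⟨n, p, σ, τ, hp, fun k => (hσ k).1, fun k => (hτ k).1, hsum⟩

lemma sepcut2_state {ρ : Matrix (Fin d₁ × Fin d₂ × Fin d₃) (Fin d₁ × Fin d₂ × Fin d₃) ℂ}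
    (h : SepCut2 ρ) : ∃ ω : Matrix (Fin d₂ × Fin d₁ × Fin d₃) (Fin d₂ × Fin d₁ × Fin d₃) ℂ,
      BipSep ω ∧ ρ = ω.submatrix (eq2 d₁ d₂ d₃) (eq2 d₁ d₂ d₃) := by
  obtain ⟨n, p, σ, τ, hp, _, hσ, hτ, hsum⟩ := h
  refine ⟨∑ k, (p k : ℂ) • (σ k ⊗ₖ τ k),
    ⟨n, p, σ, τ, hp, fun k => (hσ k).1, fun k => (hτ k).1, rfl⟩, ?_⟩
  rw [hsum]
  ext ⟨a, b, c⟩ ⟨a', b', c'⟩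
  simp [Matrix.sum_apply, Matrix.submatrix_apply, Matrix.kroneckerMap_apply, eq2]

lemma sepcut3_state {ρ : Matrix (Fin d₁ × Fin d₂ × Fin d₃) (Fin d₁ × Fin d₂ × Fin d₃) ℂ}
    (h : SepCut3 ρ) : ∃ ω : Matrix (Fin d₃ × Fin d₁ × Fin d₂) (Fin d₃ × Fin d₁ × Fin d₂) ℂ,
      BipSep ω ∧ ρ = ω.submatrix (eq3 d₁ d₂ d₃) (eq3 d₁ d₂ d₃) := by
  obtain ⟨n, p, σ, τ, hp, _, hσ, hτ, hsum⟩ := h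
  refine ⟨∑ k, (p k : ℂ) • (σ k ⊗ₖ τ k),
    ⟨n, p, σ, τ, hp, fun k => (hσ k).1, fun k => (hτ k).1, rfl⟩, ?_⟩
  rw [hsum]
  ext ⟨a, b, c⟩ ⟨a', b', c'⟩
  simp [Matrix.sum_apply, Matrix.submatrix_apply, Matrix.kroneckerMap_apply, eq3]

variable (X₁ Y₁ : Matrix (Fin d₁) (Fin d₁) ℂ) (X₂ Y₂ : Matrix (Fin d₂) (Fin d₂) ℂ)
  (X₃ Y₃ : Matrix (Fin d₃) (Fin d₃) ℂ)

lemma sep1_bound {ω : Matrix (Fin d₁ × Fin d₂ × Fin d₃) (Fin d₁ × Fin d₂ × Fin d₃) ℂ}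
    (h : SepCut1 ω) :
    ‖(((X₁ * Y₁) ⊗ₖ ((X₂ * Y₂) ⊗ₖ (X₃ * Y₃))) * ω).trace‖ ≤
      Real.sqrt ((((X₁ * X₁ᴴ) ⊗ₖ ((Y₂ᴴ * Y₂) ⊗ₖ (Y₃ᴴ * Y₃))) * ω).trace.re *
                 (((Y₁ᴴ * Y₁) ⊗ₖ ((X₂ * X₂ᴴ) ⊗ₖ (X₃ * X₃ᴴ))) * ω).trace.re) :=
  bipsep_bound₃ X₁ Y₁ X₂ Y₂ X₃ Y₃ (sepcut1_bipsep h)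

lemma sep2_bound {ω : Matrix (Fin d₁ × Fin d₂ × Fin d₃) (Fin d₁ × Fin d₂ × Fin d₃) ℂ}
    (h : SepCut2 ω) :
    ‖(((X₁ * Y₁) ⊗ₖ ((X₂ * Y₂) ⊗ₖ (X₃ * Y₃))) * ω).trace‖ ≤
      Real.sqrt ((((Y₁ᴴ * Y₁) ⊗ₖ ((X₂ * X₂ᴴ) ⊗ₖ (Y₃ᴴ * Y₃))) * ω).trace.re *
                 (((X₁ * X₁ᴴ) ⊗ₖ ((Y₂ᴴ * Y₂) ⊗ₖ (X₃ * X₃ᴴ))) * ω).trace.re) := by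
  obtain ⟨ω', hb, rfl⟩ := sepcut2_state h
  rw [op2_eq (X₁ * Y₁) (X₂ * Y₂) (X₃ * Y₃), trace_submatrix_mul,
    op2_eq (Y₁ᴴ * Y₁) (X₂ * X₂ᴴ) (Y₃ᴴ * Y₃), trace_submatrix_mul,
    op2_eq (X₁ * X₁ᴴ) (Y₂ᴴ * Y₂) (X₃ * X₃ᴴ), trace_submatrix_mul]
  exact bipsep_bound₃ X₂ Y₂ X₁ Y₁ X₃ Y₃ hb

lemma sep3_bound {ω : Matrix (Fin d₁ × Fin d₂ × Fin d₃) (Fin d₁ × Fin d₂ × Fin d₃) ℂ}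
    (h : SepCut3 ω) :
    ‖(((X₁ * Y₁) ⊗ₖ ((X₂ * Y₂) ⊗ₖ (X₃ * Y₃))) * ω).trace‖ ≤
      Real.sqrt ((((Y₁ᴴ * Y₁) ⊗ₖ ((Y₂ᴴ * Y₂) ⊗ₖ (X₃ * X₃ᴴ))) * ω).trace.re *
                 (((X₁ * X₁ᴴ) ⊗ₖ ((X₂ * X₂ᴴ) ⊗ₖ (Y₃ᴴ * Y₃))) * ω).trace.re) := by
  obtain ⟨ω', hb, rfl⟩ := sepcut3_state h
  rw [op3_eq (X₁ * Y₁) (X₂ * Y₂) (X₃ * Y₃), trace_submatrix_mul,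
    op3_eq (Y₁ᴴ * Y₁) (Y₂ᴴ * Y₂) (X₃ * X₃ᴴ), trace_submatrix_mul,
    op3_eq (X₁ * X₁ᴴ) (X₂ * X₂ᴴ) (Y₃ᴴ * Y₃), trace_submatrix_mul]
  exact bipsep_bound₃ X₃ Y₃ X₁ Y₁ X₂ Y₂ hb

end Cuts
/-- **The criterion for genuine multipartite entanglement (final inequality of
Sec. III E).**  For every biseparable tripartite state `ρ`:
`|⟨∏ₖ XₖYₖ⟩| ≤ √(T₁ T₂₃) + √(T₂ T₁₃) + √(T₃ T₁₂)`,
where `T_M = ⟨⊗ₖ O_k^M⟩` with `O_k^M = XₖXₖ†` for `k ∈ M` and `O_k^M = Yₖ†Yₖ` otherwise. -/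
theorem biseparable_criterion {d₁ d₂ d₃ : ℕ}
    (ρ : Matrix (Fin d₁ × Fin d₂ × Fin d₃) (Fin d₁ × Fin d₂ × Fin d₃) ℂ)
    (hρ : IsDensityMatrix ρ) (hbisep : Biseparable ρ)
    (X₁ Y₁ : Matrix (Fin d₁) (Fin d₁) ℂ) (X₂ Y₂ : Matrix (Fin d₂) (Fin d₂) ℂ)
    (X₃ Y₃ : Matrix (Fin d₃) (Fin d₃) ℂ) :
    ‖(((X₁ * Y₁) ⊗ₖ ((X₂ * Y₂) ⊗ₖ (X₃ * Y₃))) * ρ).trace‖ ≤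
      Real.sqrt
        (((((X₁ * X₁ᴴ) ⊗ₖ ((Y₂ᴴ * Y₂) ⊗ₖ (Y₃ᴴ * Y₃))) * ρ).trace).re *
         ((((Y₁ᴴ * Y₁) ⊗ₖ ((X₂ * X₂ᴴ) ⊗ₖ (X₃ * X₃ᴴ))) * ρ).trace).re) +
      Real.sqrt
        (((((Y₁ᴴ * Y₁) ⊗ₖ ((X₂ * X₂ᴴ) ⊗ₖ (Y₃ᴴ * Y₃))) * ρ).trace).re *
         ((((X₁ * X₁ᴴ) ⊗ₖ ((Y₂ᴴ * Y₂) ⊗ₖ (X₃ * X₃ᴴ))) * ρ).trace).re) +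
      Real.sqrt
        (((((Y₁ᴴ * Y₁) ⊗ₖ ((Y₂ᴴ * Y₂) ⊗ₖ (X₃ * X₃ᴴ))) * ρ).trace).re *
         ((((X₁ * X₁ᴴ) ⊗ₖ ((X₂ * X₂ᴴ) ⊗ₖ (Y₃ᴴ * Y₃))) * ρ).trace).re) := by
  classical
  obtain ⟨n, p, σ, hp, hpsum, hdens, hcut, hρeq⟩ := hbisep
  set W := (X₁ * Y₁) ⊗ₖ ((X₂ * Y₂) ⊗ₖ (X₃ * Y₃)) with hW
  set O1a := (X₁ * X₁ᴴ) ⊗ₖ ((Y₂ᴴ * Y₂) ⊗ₖ (Y₃ᴴ * Y₃)) with hO1a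
  set O1b := (Y₁ᴴ * Y₁) ⊗ₖ ((X₂ * X₂ᴴ) ⊗ₖ (X₃ * X₃ᴴ)) with hO1b
  set O2a := (Y₁ᴴ * Y₁) ⊗ₖ ((X₂ * X₂ᴴ) ⊗ₖ (Y₃ᴴ * Y₃)) with hO2a
  set O2b := (X₁ * X₁ᴴ) ⊗ₖ ((Y₂ᴴ * Y₂) ⊗ₖ (X₃ * X₃ᴴ)) with hO2b
  set O3a := (Y₁ᴴ * Y₁) ⊗ₖ ((Y₂ᴴ * Y₂) ⊗ₖ (X₃ * X₃ᴴ)) with hO3a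
  set O3b := (X₁ * X₁ᴴ) ⊗ₖ ((X₂ * X₂ᴴ) ⊗ₖ (Y₃ᴴ * Y₃)) with hO3b
  have hO1a_psd : O1a.PosSemidef := kron_posSemidef
    (Matrix.posSemidef_self_mul_conjTranspose X₁)
    (kron_posSemidef (Matrix.posSemidef_conjTranspose_mul_self Y₂)
      (Matrix.posSemidef_conjTranspose_mul_self Y₃))
  have hO1b_psd : O1b.PosSemidef := kron_posSemidef
    (Matrix.posSemidef_conjTranspose_mul_self Y₁)
    (kron_posSemidef (Matrix.posSemidef_self_mul_conjTranspose X₂)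
      (Matrix.posSemidef_self_mul_conjTranspose X₃))
  have hO2a_psd : O2a.PosSemidef := kron_posSemidef
    (Matrix.posSemidef_conjTranspose_mul_self Y₁)
    (kron_posSemidef (Matrix.posSemidef_self_mul_conjTranspose X₂)
      (Matrix.posSemidef_conjTranspose_mul_self Y₃))
  have hO2b_psd : O2b.PosSemidef := kron_posSemidef
    (Matrix.posSemidef_self_mul_conjTranspose X₁)
    (kron_posSemidef (Matrix.posSemidef_conjTranspose_mul_self Y₂)
      (Matrix.posSemidef_self_mul_conjTranspose X₃))
  have hO3a_psd : O3a.PosSemidef := kron_posSemidef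
    (Matrix.posSemidef_conjTranspose_mul_self Y₁)
    (kron_posSemidef (Matrix.posSemidef_conjTranspose_mul_self Y₂)
      (Matrix.posSemidef_self_mul_conjTranspose X₃))
  have hO3b_psd : O3b.PosSemidef := kron_posSemidef
    (Matrix.posSemidef_self_mul_conjTranspose X₁)
    (kron_posSemidef (Matrix.posSemidef_self_mul_conjTranspose X₂)
      (Matrix.posSemidef_conjTranspose_mul_self Y₃))
  have hnn : ∀ (O : Matrix (Fin d₁ × Fin d₂ × Fin d₃) (Fin d₁ × Fin d₂ × Fin d₃) ℂ),
      O.PosSemidef → ∀ k, 0 ≤ ((O * σ k).trace).re :=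
    fun O hO k => (psd_mul_trace hO (hdens k).1).2
  have hT : ∀ (O : Matrix (Fin d₁ × Fin d₂ × Fin d₃) (Fin d₁ × Fin d₂ × Fin d₃) ℂ),
      ((O * ρ).trace).re = ∑ k, p k * ((O * σ k).trace).re := fun O => by
    rw [hρeq]; exact re_trace_mul_sum_smul O p σ
  have habs : ‖(W * ρ).trace‖ ≤
      ∑ k, p k * ‖(W * σ k).trace‖ := by
    rw [hρeq, trace_mul_sum_smul]
    refine (norm_sum_le _ _).trans_eq ?_
    exact Finset.sum_congr rfl fun k _ => by
      rw [norm_mul, Complex.norm_real, Real.norm_eq_abs, abs_of_nonneg (hp k)]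
  have hgrp : ∀ (s : Finset (Fin n))
      (Oa Ob : Matrix (Fin d₁ × Fin d₂ × Fin d₃) (Fin d₁ × Fin d₂ × Fin d₃) ℂ),
      Oa.PosSemidef → Ob.PosSemidef →
      (∀ k ∈ s, ‖(W * σ k).trace‖ ≤
        Real.sqrt (((Oa * σ k).trace).re * ((Ob * σ k).trace).re)) →
      ∑ k ∈ s, p k * ‖(W * σ k).trace‖ ≤
        Real.sqrt (((Oa * ρ).trace).re * ((Ob * ρ).trace).re) := by
    intro s Oa Ob hOa hOb hbd
    calc ∑ k ∈ s, p k * ‖(W * σ k).trace‖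
        ≤ ∑ k ∈ s, p k * Real.sqrt (((Oa * σ k).trace).re * ((Ob * σ k).trace).re) :=
          Finset.sum_le_sum fun k hk => mul_le_mul_of_nonneg_left (hbd k hk) (hp k)
      _ ≤ Real.sqrt ((∑ k, p k * ((Oa * σ k).trace).re) * (∑ k, p k * ((Ob * σ k).trace).re)) :=
          group_bound s p _ _ hp (hnn Oa hOa) (hnn Ob hOb)
      _ = _ := by rw [hT Oa, hT Ob]
  set s₁ := Finset.univ.filter (fun k => SepCut1 (σ k)) with hs₁
  set s₂ := (Finset.univ.filter (fun k => ¬ SepCut1 (σ k))).filter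
    (fun k => SepCut2 (σ k)) with hs₂
  set s₃ := (Finset.univ.filter (fun k => ¬ SepCut1 (σ k))).filter
    (fun k => ¬ SepCut2 (σ k)) with hs₃
  have hsplit : ∑ k, p k * ‖(W * σ k).trace‖ =
      (∑ k ∈ s₁, p k * ‖(W * σ k).trace‖ +
       ∑ k ∈ s₂, p k * ‖(W * σ k).trace‖) +
       ∑ k ∈ s₃, p k * ‖(W * σ k).trace‖ := by
    rw [add_assoc, hs₁, hs₂, hs₃,
      Finset.sum_filter_add_sum_filter_not
        (Finset.univ.filter (fun k => ¬ SepCut1 (σ k))) (fun k => SepCut2 (σ k)),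
      Finset.sum_filter_add_sum_filter_not Finset.univ (fun k => SepCut1 (σ k))]
  refine habs.trans (hsplit.le.trans ?_)
  refine add_le_add (add_le_add ?_ ?_) ?_
  · refine hgrp s₁ O1a O1b hO1a_psd hO1b_psd fun k hk => ?_
    exact sep1_bound X₁ Y₁ X₂ Y₂ X₃ Y₃ (by simpa using (Finset.mem_filter.mp hk).2)
  · refine hgrp s₂ O2a O2b hO2a_psd hO2b_psd fun k hk => ?_
    exact sep2_bound X₁ Y₁ X₂ Y₂ X₃ Y₃ ((Finset.mem_filter.mp hk).2)
  · refine hgrp s₃ O3a O3b hO3a_psd hO3b_psd fun k hk => ?_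
    obtain ⟨hk', hn2⟩ := Finset.mem_filter.mp hk
    obtain ⟨-, hn1⟩ := Finset.mem_filter.mp hk'
    exact sep3_bound X₁ Y₁ X₂ Y₂ X₃ Y₃ (((hcut k).resolve_left hn1).resolve_left hn2)
end
end
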